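/- In the lattice Sub(B) of subalgebras of a Boolean algebra B, every ideal subalgebra (a subalgebra of the form I ∪ I' for an ideal I of B, where I' = {a' : a ∈ I}) is a dual modular element of Sub(B). -/
import Mathlib


/-- A (Boolean) subalgebra of a Boolean algebra. -/
def IsSubalg {B : Type*} [BooleanAlgebra B] (S : Set B) : Prop :=
  ⊥ ∈ S ∧ ⊤ ∈ S ∧ (∀ a ∈ S, ∀ b ∈ S, a ⊓ b ∈ S) ∧
    (∀ a ∈ S, ∀ b ∈ S, a ⊔ b ∈ S) ∧ (∀ a ∈ S, aᶜ ∈ S)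

def Subalg (B : Type*) [BooleanAlgebra B] := {S : Set B // IsSubalg S}

variable {B : Type*} [BooleanAlgebra B]

/-- The meet in `Sub(B)`: intersection of subalgebras. -/
def meetS (S T : Subalg B) : Subalg B :=
  ⟨S.1 ∩ T.1, by
    obtain ⟨h1, h2, h3, h4, h5⟩ := S.2
    obtain ⟨g1, g2, g3, g4, g5⟩ := T.2
    exact ⟨⟨h1, g1⟩, ⟨h2, g2⟩,
      fun a ha b hb => ⟨h3 a ha.1 b hb.1, g3 a ha.2 b hb.2⟩,
      fun a ha b hb => ⟨h4 a ha.1 b hb.1, g4 a ha.2 b hb.2⟩,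
      fun a ha => ⟨h5 a ha.1, g5 a ha.2⟩⟩⟩

/-- The join in `Sub(B)`: the subalgebra generated by the union, i.e. the
intersection of all subalgebras containing both. -/
def joinS (S T : Subalg B) : Subalg B :=
  ⟨⋂₀ {U : Set B | IsSubalg U ∧ S.1 ⊆ U ∧ T.1 ⊆ U}, by
    refine ⟨Set.mem_sInter.mpr fun U hU => hU.1.1,
      Set.mem_sInter.mpr fun U hU => hU.1.2.1, ?_, ?_, ?_⟩
    · intro a ha b hb
      exact Set.mem_sInter.mpr fun U hU =>
        hU.1.2.2.1 a (Set.mem_sInter.mp ha U hU) b (Set.mem_sInter.mp hb U hU)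
    · intro a ha b hb
      exact Set.mem_sInter.mpr fun U hU =>
        hU.1.2.2.2.1 a (Set.mem_sInter.mp ha U hU) b (Set.mem_sInter.mp hb U hU)
    · intro a ha
      exact Set.mem_sInter.mpr fun U hU =>
        hU.1.2.2.2.2 a (Set.mem_sInter.mp ha U hU)⟩

/-- `x` is a dual modular element of the lattice `Sub(B)`:
`(x ∨ y) ∧ z = x ∨ (y ∧ z)` whenever `x ≤ z`, and
`(w ∨ x) ∧ y = w ∨ (x ∧ y)` whenever `w ≤ y`. -/
def DualModularS (x : Subalg B) : Prop :=
  (∀ y z : Subalg B, x.1 ⊆ z.1 → meetS (joinS x y) z = joinS x (meetS y z)) ∧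
  (∀ w y : Subalg B, w.1 ⊆ y.1 → meetS (joinS w x) y = joinS w (meetS x y))


open scoped symmDiff

lemma symmDiff_inf_le_aux (a b c d : B) : (a ⊓ b) ∆ (c ⊓ d) ≤ a ∆ c ⊔ b ∆ d := by
  simp only [symmDiff, sdiff_eq, compl_inf, sup_le_iff, inf_sup_left]
  refine ⟨⟨?_, ?_⟩, ?_, ?_⟩
  · exact le_sup_of_le_left (le_sup_of_le_left (inf_le_inf_right _ inf_le_left))
  · exact le_sup_of_le_right (le_sup_of_le_left (inf_le_inf_right _ inf_le_right))
  · exact le_sup_of_le_left (le_sup_of_le_right (inf_le_inf_right _ inf_le_left))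
  · exact le_sup_of_le_right (le_sup_of_le_right (inf_le_inf_right _ inf_le_right))

lemma symmDiff_sup_le_aux (a b c d : B) : (a ⊔ b) ∆ (c ⊔ d) ≤ a ∆ c ⊔ b ∆ d := by
  rw [← compl_symmDiff_compl (a ⊔ b) (c ⊔ d), compl_sup, compl_sup,
    ← compl_symmDiff_compl a c, ← compl_symmDiff_compl b d]
  exact symmDiff_inf_le_aux _ _ _ _

lemma subalg_symmDiff {U : Set B} (hU : IsSubalg U) {a b : B}
    (ha : a ∈ U) (hb : b ∈ U) : a ∆ b ∈ U := by
  obtain ⟨_, _, h3, h4, h5⟩ := hU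
  rw [symmDiff, sdiff_eq, sdiff_eq]
  exact h4 _ (h3 a ha _ (h5 b hb)) _ (h3 b hb _ (h5 a ha))

lemma le_joinS_left (S T : Subalg B) : S.1 ⊆ (joinS S T).1 :=
  fun _ ha => Set.mem_sInter.mpr fun _ hU => hU.2.1 ha

lemma le_joinS_right (S T : Subalg B) : T.1 ⊆ (joinS S T).1 :=
  fun _ ha => Set.mem_sInter.mpr fun _ hU => hU.2.2 ha

lemma joinS_le {S T U : Subalg B} (h1 : S.1 ⊆ U.1) (h2 : T.1 ⊆ U.1) :
    (joinS S T).1 ⊆ U.1 :=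
  fun _ ha => Set.mem_sInter.mp ha U.1 ⟨U.2, h1, h2⟩

/-- The set of elements differing from an element of `y` by an element of the
ideal `I` is a subalgebra containing `x = I ∪ I'` and `y`. -/
lemma ideal_join_char (x : Subalg B) (I : Order.Ideal B)
    (hx : x.1 = ↑I ∪ (compl '' ↑I)) (y : Subalg B) :
    IsSubalg {b : B | ∃ s ∈ y.1, b ∆ s ∈ I} ∧
      x.1 ⊆ {b : B | ∃ s ∈ y.1, b ∆ s ∈ I} ∧
      y.1 ⊆ {b : B | ∃ s ∈ y.1, b ∆ s ∈ I} := by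
  obtain ⟨y1, y2, y3, y4, y5⟩ := y.2
  refine ⟨⟨⟨⊥, y1, by simp⟩, ⟨⊤, y2, by simp⟩, ?_, ?_, ?_⟩, ?_, ?_⟩
  · rintro a ⟨s, hs, hds⟩ b ⟨t, ht, hdt⟩
    exact ⟨s ⊓ t, y3 s hs t ht,
      I.lower (symmDiff_inf_le_aux a b s t) (I.sup_mem hds hdt)⟩
  · rintro a ⟨s, hs, hds⟩ b ⟨t, ht, hdt⟩
    exact ⟨s ⊔ t, y4 s hs t ht,
      I.lower (symmDiff_sup_le_aux a b s t) (I.sup_mem hds hdt)⟩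
  · rintro a ⟨s, hs, hds⟩
    exact ⟨sᶜ, y5 s hs, by rwa [compl_symmDiff_compl]⟩
  · rw [hx]
    rintro a (ha | ⟨i, hi, rfl⟩)
    · exact ⟨⊥, y1, by simpa using ha⟩
    · exact ⟨⊤, y2, by simpa [symmDiff_top] using hi⟩
  · exact fun s hs => ⟨s, hs, by simp⟩

lemma mem_join_ideal_left {x : Subalg B} {I : Order.Ideal B}
    (hx : x.1 = ↑I ∪ (compl '' ↑I)) {y : Subalg B} {b : B}
    (hb : b ∈ (joinS x y).1) : ∃ s ∈ y.1, b ∆ s ∈ I := by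
  obtain ⟨hJ, hxJ, hyJ⟩ := ideal_join_char x I hx y
  exact Set.mem_sInter.mp hb _ ⟨hJ, hxJ, hyJ⟩

lemma mem_join_ideal_right {x : Subalg B} {I : Order.Ideal B}
    (hx : x.1 = ↑I ∪ (compl '' ↑I)) {w : Subalg B} {b : B}
    (hb : b ∈ (joinS w x).1) : ∃ s ∈ w.1, b ∆ s ∈ I := by
  obtain ⟨hJ, hxJ, hwJ⟩ := ideal_join_char x I hx w
  exact Set.mem_sInter.mp hb _ ⟨hJ, hwJ, hxJ⟩

/-- Every ideal subalgebra `I ∪ I'` of a Boolean algebra `B` is a dual modular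
element of `Sub(B)`. -/
theorem stmt1 (x : Subalg B) (I : Order.Ideal B)
    (hx : x.1 = ↑I ∪ (compl '' ↑I)) : DualModularS x := by
  constructor
  · intro y z hxz
    apply Subtype.ext
    apply Set.Subset.antisymm
    · rintro b ⟨hbj, hbz⟩
      obtain ⟨s, hs, hd⟩ := mem_join_ideal_left hx hbj
      have hdx : b ∆ s ∈ x.1 := by rw [hx]; exact Or.inl hd
      have hdz : b ∆ s ∈ z.1 := hxz hdx
      have hsz : s ∈ z.1 := by
        have := subalg_symmDiff z.2 hbz hdz
        rwa [symmDiff_symmDiff_cancel_left] at this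
      refine Set.mem_sInter.mpr fun U hU => ?_
      have := subalg_symmDiff hU.1 (hU.2.1 hdx) (hU.2.2 ⟨hs, hsz⟩)
      rwa [symmDiff_symmDiff_cancel_right] at this
    · intro b hb
      exact ⟨joinS_le (T := meetS y z) (le_joinS_left x y)
          (fun a (ha : a ∈ y.1 ∩ z.1) => le_joinS_right x y ha.1) hb,
        joinS_le (T := meetS y z) hxz (fun a (ha : a ∈ y.1 ∩ z.1) => ha.2) hb⟩
  · intro w y hwy
    apply Subtype.ext
    apply Set.Subset.antisymm
    · rintro b ⟨hbj, hby⟩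
      obtain ⟨s, hs, hd⟩ := mem_join_ideal_right hx hbj
      have hdx : b ∆ s ∈ x.1 := by rw [hx]; exact Or.inl hd
      have hdy : b ∆ s ∈ y.1 := subalg_symmDiff y.2 hby (hwy hs)
      refine Set.mem_sInter.mpr fun U hU => ?_
      have := subalg_symmDiff hU.1 (hU.2.2 ⟨hdx, hdy⟩) (hU.2.1 hs)
      rwa [symmDiff_symmDiff_cancel_right] at this
    · intro b hb
      exact ⟨joinS_le (T := meetS x y) (le_joinS_left w x)
          (fun a (ha : a ∈ x.1 ∩ y.1) => le_joinS_right w x ha.1) hb,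
        joinS_le (T := meetS x y) hwy (fun a (ha : a ∈ x.1 ∩ y.1) => ha.2) hb⟩
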